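/- N is analytic in ℂ ∖ ((−∞,−1] ∪ [1,∞)); for every x > 1 its boundary values satisfy N₊(x) = N₋(x)·[[0,0,1,0],[0,1,0,0],[−1,0,0,0],[0,0,0,1]], and for every x < −1 they satisfy N₊(x) = N₋(x)·[[1,0,0,0],[0,0,0,1],[0,0,1,0],[0,−1,0,0]]; moreover, as z → ∞ with z ∉ ℝ, N(z)·A^{−1}·diag((−z)^{1/4}, z^{1/4}, (−z)^{−1/4}, z^{−1/4}) = I + O(z^{−1}), where (−z)^{±1/4} and z^{±1/4} are principal branches. -/

import Mathlib

open Complex Filter Topology Set Asymptotics Matrix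

/-- The constant matrix `A`. -/
noncomputable def Amat : Matrix (Fin 4) (Fin 4) ℂ :=
  ((1 : ℂ) / Real.sqrt 2) •
    !![1, 0, -Complex.I, 0;
       0, 1, 0, Complex.I;
       -Complex.I, 0, 1, 0;
       0, Complex.I, 0, 1]

/-- The global parametrix `N(z) = diag((1-z)^{-1/4}, (z+1)^{-1/4}, (1-z)^{1/4}, (z+1)^{1/4})·A`,
with principal branches. -/
noncomputable def Nmat (z : ℂ) : Matrix (Fin 4) (Fin 4) ℂ :=
  Matrix.diagonal ![(1 - z) ^ (-(1:ℂ)/4), (z + 1) ^ (-(1:ℂ)/4),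
    (1 - z) ^ ((1:ℂ)/4), (z + 1) ^ ((1:ℂ)/4)] * Amat

/-- `ℂ ∖ ((-∞,-1] ∪ [1,∞))`. -/
def twoCutPlane : Set ℂ := {z : ℂ | ¬(z.im = 0 ∧ (z.re ≤ -1 ∨ 1 ≤ z.re))}

open Real

noncomputable def Bmat : Matrix (Fin 4) (Fin 4) ℂ :=
  ((1 : ℂ) / Real.sqrt 2) •
    !![1, 0, Complex.I, 0; 0, 1, 0, -Complex.I; Complex.I, 0, 1, 0; 0, -Complex.I, 0, 1]
lemma amat_mul_bmat : Amat * Bmat = 1 := by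
  have hsq : ((Real.sqrt 2 : ℝ) : ℂ)^2 = 2 := by
    rw [← Complex.ofReal_pow, Real.sq_sqrt (by norm_num)]; norm_num
  ext i j
  fin_cases i <;> fin_cases j <;>
    simp [Amat, Bmat, Matrix.mul_apply, Fin.sum_univ_four, Matrix.one_apply] <;>
    ring_nf <;> simp [Complex.I_sq, hsq] <;> norm_num
lemma amat_mul_inv : Amat * Amat⁻¹ = 1 := by
  rw [Matrix.inv_eq_right_inv amat_mul_bmat]; exact amat_mul_bmat

noncomputable def mfun (z : ℂ) : Fin 4 → ℂ :=
  ![(-z) ^ ((1:ℂ)/4), z ^ ((1:ℂ)/4), (-z) ^ (-(1:ℂ)/4), z ^ (-(1:ℂ)/4)]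
noncomputable def vfun (z : ℂ) : Fin 4 → ℂ :=
  ![(1 - z) ^ (-(1:ℂ)/4), (z + 1) ^ (-(1:ℂ)/4), (1 - z) ^ ((1:ℂ)/4), (z + 1) ^ ((1:ℂ)/4)]

lemma structural (z : ℂ) :
    Nmat z * Amat⁻¹ * Matrix.diagonal ![(-z) ^ ((1:ℂ)/4), z ^ ((1:ℂ)/4),
        (-z) ^ (-(1:ℂ)/4), z ^ (-(1:ℂ)/4)] - 1
      = Matrix.diagonal (fun i => vfun z i * mfun z i - 1) := by
  show Nmat z * Amat⁻¹ * Matrix.diagonal (mfun z) - 1 = _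
  have h : Nmat z = Matrix.diagonal (vfun z) * Amat := rfl
  rw [h, mul_assoc (Matrix.diagonal (vfun z)) Amat Amat⁻¹, amat_mul_inv, mul_one,
    Matrix.diagonal_mul_diagonal, ← Matrix.diagonal_one, Matrix.diagonal_sub]

lemma cpow_mul_cpow_neg {a b : ℂ} (c : ℂ)
    (h : (0 < a.im ∧ 0 < b.im) ∨ (a.im < 0 ∧ b.im < 0)) :
    a ^ c * b ^ (-c) = (a / b) ^ c := by
  have haim : a.im ≠ 0 := by rcases h with ⟨h1, _⟩ | ⟨h1, _⟩ <;> [exact ne_of_gt h1; exact ne_of_lt h1]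
  have hbim : b.im ≠ 0 := by rcases h with ⟨_, h1⟩ | ⟨_, h1⟩ <;> [exact ne_of_gt h1; exact ne_of_lt h1]
  have ha : a ≠ 0 := fun h0 => haim (by simp [h0])
  have hb : b ≠ 0 := fun h0 => hbim (by simp [h0])
  have hargb : arg b ≠ π := fun h0 => hbim (arg_eq_pi_iff.1 h0).2
  have harga : arg a ≠ π := fun h0 => haim (arg_eq_pi_iff.1 h0).2
  have harginv : arg b⁻¹ = -arg b := by rw [arg_inv, if_neg hargb]
  have hmem : arg a + arg b⁻¹ ∈ Set.Ioc (-π) π := by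
    rw [harginv]
    rcases h with ⟨h1, h2⟩ | ⟨h1, h2⟩
    · have ha1 : 0 ≤ arg a := arg_nonneg_iff.2 h1.le
      have ha2 : arg a < π := lt_of_le_of_ne (arg_le_pi a) harga
      have hb1 : 0 ≤ arg b := arg_nonneg_iff.2 h2.le
      have hb2 : arg b < π := lt_of_le_of_ne (arg_le_pi b) hargb
      constructor <;> [linarith [Real.pi_pos]; linarith]
    · have ha1 : arg a < 0 := arg_neg_iff.2 h1
      have ha2 : -π < arg a := neg_pi_lt_arg a
      have hb1 : arg b < 0 := arg_neg_iff.2 h2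
      have hb2 : -π < arg b := neg_pi_lt_arg b
      constructor <;> [linarith; linarith [Real.pi_pos]]
  have hlog : Complex.log (a * b⁻¹) = Complex.log a + Complex.log b⁻¹ :=
    Complex.log_mul ha (inv_ne_zero hb) hmem
  rw [div_eq_mul_inv, Complex.cpow_def_of_ne_zero (mul_ne_zero ha (inv_ne_zero hb)), hlog,
    Complex.log_inv b hargb, Complex.cpow_def_of_ne_zero ha, Complex.cpow_def_of_ne_zero hb,
    ← Complex.exp_add]
  ring_nf

lemma aux_bigO (b : ℂ) : (fun z : ℂ => (z + b)⁻¹) =O[Bornology.cobounded ℂ] (fun z => z⁻¹) := by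
  rw [Asymptotics.isBigO_iff]
  refine ⟨2, ?_⟩
  filter_upwards [eventually_cobounded_le_norm (2 * ‖b‖ + 1)] with z hz
  have h1 : ‖z‖ ≤ ‖z + b‖ + ‖b‖ := by
    calc ‖z‖ = ‖(z + b) + (-b)‖ := by ring_nf
    _ ≤ ‖z + b‖ + ‖-b‖ := norm_add_le _ _
    _ = ‖z + b‖ + ‖b‖ := by rw [norm_neg]
  have hb0 : (0:ℝ) ≤ ‖b‖ := norm_nonneg b
  have hz0 : (0:ℝ) < ‖z‖ := by linarith
  rw [norm_inv, norm_inv, show (2:ℝ) * ‖z‖⁻¹ = (‖z‖/2)⁻¹ by field_simp]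
  exact inv_anti₀ (by positivity) (by linarith)

lemma aux_tendsto (b : ℂ) :
    Tendsto (fun z : ℂ => (z + b)⁻¹) (Bornology.cobounded ℂ) (𝓝 0) :=
  (aux_bigO b).trans_tendsto tendsto_inv₀_cobounded

lemma hO_quarter {L : Filter ℂ} {u : ℂ → ℂ} (hu : Tendsto u L (𝓝 1)) :
    (fun z => (u z) ^ ((1:ℂ)/4) - 1) =O[L] (fun z => u z - 1) := by
  have hd : DifferentiableAt ℂ (fun w : ℂ => w ^ ((1:ℂ)/4)) 1 :=
    DifferentiableAt.cpow differentiableAt_id (differentiableAt_const _)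
      (by simp [Complex.slitPlane])
  have h2 : (fun w : ℂ => w ^ ((1:ℂ)/4) - 1) =O[𝓝 1] (fun w => w - 1) := by
    simpa [Complex.one_cpow] using hd.isBigO_sub
  exact h2.comp_tendsto hu

lemma entry_bigO {L : Filter ℂ} {f : ℂ → ℂ} (u : ℂ → ℂ)
    (hu : Tendsto u L (𝓝 1))
    (h1 : (fun z => u z - 1) =O[L] (fun z : ℂ => z⁻¹))
    (heq : ∀ᶠ z in L, f z = u z ^ ((1:ℂ)/4) - 1) :
    f =O[L] (fun z : ℂ => z⁻¹) :=
  ((hO_quarter hu).trans h1).congr' (EventuallyEq.symm heq) EventuallyEq.rfl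

lemma part4 (i j : Fin 4) :
    (fun z : ℂ =>
        (Nmat z * Amat⁻¹ *
          Matrix.diagonal ![(-z) ^ ((1:ℂ)/4), z ^ ((1:ℂ)/4),
            (-z) ^ (-(1:ℂ)/4), z ^ (-(1:ℂ)/4)]
          - 1) i j)
      =O[(Bornology.cobounded ℂ) ⊓ Filter.principal {z : ℂ | z.im ≠ 0}]
        (fun z : ℂ => z⁻¹) := by
  set L := (Bornology.cobounded ℂ) ⊓ Filter.principal {z : ℂ | z.im ≠ 0} with hLdef
  have ev : ∀ᶠ z in L, z.im ≠ 0 := by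
    rw [hLdef, eventually_inf_principal]
    exact Eventually.of_forall fun z h => h
  have hq : -(1:ℂ)/4 = -((1:ℂ)/4) := by norm_num
  have hc0 : (fun z : ℂ => (1 - z) ^ (-(1:ℂ)/4) * (-z) ^ ((1:ℂ)/4) - 1) =O[L]
      (fun z : ℂ => z⁻¹) := by
    apply entry_bigO (fun z : ℂ => 1 + (z + (-1:ℂ))⁻¹)
    · simpa using tendsto_const_nhds.add ((aux_tendsto (-1)).mono_left inf_le_left)
    · exact ((aux_bigO (-1)).mono inf_le_left).congr_left (fun z => by ring)
    · filter_upwards [ev] with z hz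
      have hz1 : (1:ℂ) - z ≠ 0 := by
        intro h0; apply hz
        have := congrArg Complex.im h0; simp at this; linarith
      have hz2 : z + (-1:ℂ) ≠ 0 := by
        rw [show z + (-1:ℂ) = -(1 - z) by ring]; exact neg_ne_zero.2 hz1
      have key : (-z) ^ ((1:ℂ)/4) * (1 - z) ^ (-((1:ℂ)/4)) = ((-z)/(1 - z)) ^ ((1:ℂ)/4) := by
        apply cpow_mul_cpow_neg
        rcases lt_or_gt_of_ne hz with h | h
        · left; constructor <;> first | linarith | (simp; linarith)
        · right; constructor <;> first | linarith | (simp; linarith)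
      have hval : (1 + (z + (-1:ℂ))⁻¹) = (-z)/(1 - z) := by field_simp [hz1, hz2]; ring
      rw [hval, ← key, hq]; ring
  have hc1 : (fun z : ℂ => (z + 1) ^ (-(1:ℂ)/4) * z ^ ((1:ℂ)/4) - 1) =O[L]
      (fun z : ℂ => z⁻¹) := by
    apply entry_bigO (fun z : ℂ => 1 - (z + 1)⁻¹)
    · simpa using tendsto_const_nhds.sub ((aux_tendsto 1).mono_left inf_le_left)
    · exact (((aux_bigO 1).mono inf_le_left).neg_left).congr_left (fun z => by ring)
    · filter_upwards [ev] with z hz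
      have hz0 : z ≠ 0 := fun h0 => hz (by simp [h0])
      have hz1 : z + (1:ℂ) ≠ 0 := by
        intro h0; apply hz
        have := congrArg Complex.im h0; simpa using this
      have key : z ^ ((1:ℂ)/4) * (z + 1) ^ (-((1:ℂ)/4)) = (z/(z + 1)) ^ ((1:ℂ)/4) := by
        apply cpow_mul_cpow_neg
        rcases lt_or_gt_of_ne hz with h | h
        · right; constructor <;> first | linarith | (simp; linarith)
        · left; constructor <;> first | linarith | (simp; linarith)
      have hval : (1 - (z + 1)⁻¹) = z/(z + 1) := by field_simp [hz1]; ring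
      rw [hval, ← key, hq]; ring
  have hc2 : (fun z : ℂ => (1 - z) ^ ((1:ℂ)/4) * (-z) ^ (-(1:ℂ)/4) - 1) =O[L]
      (fun z : ℂ => z⁻¹) := by
    apply entry_bigO (fun z : ℂ => 1 - z⁻¹)
    · simpa using tendsto_const_nhds.sub
        ((tendsto_inv₀_cobounded (α := ℂ)).mono_left inf_le_left)
    · exact ((isBigO_refl (fun z : ℂ => z⁻¹) L).neg_left).congr_left (fun z => by ring)
    · filter_upwards [ev] with z hz
      have hz0 : z ≠ 0 := fun h0 => hz (by simp [h0])
      have key : (1 - z) ^ ((1:ℂ)/4) * (-z) ^ (-((1:ℂ)/4)) = ((1 - z)/(-z)) ^ ((1:ℂ)/4) := by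
        apply cpow_mul_cpow_neg
        rcases lt_or_gt_of_ne hz with h | h
        · left; constructor <;> first | linarith | (simp; linarith)
        · right; constructor <;> first | linarith | (simp; linarith)
      have hval : (1 - z⁻¹) = (1 - z)/(-z) := by field_simp [hz0]; ring
      rw [hval, ← key, hq]
  have hc3 : (fun z : ℂ => (z + 1) ^ ((1:ℂ)/4) * z ^ (-(1:ℂ)/4) - 1) =O[L]
      (fun z : ℂ => z⁻¹) := by
    apply entry_bigO (fun z : ℂ => 1 + z⁻¹)
    · simpa using tendsto_const_nhds.add
        ((tendsto_inv₀_cobounded (α := ℂ)).mono_left inf_le_left)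
    · exact (isBigO_refl (fun z : ℂ => z⁻¹) L).congr_left (fun z => by ring)
    · filter_upwards [ev] with z hz
      have hz0 : z ≠ 0 := fun h0 => hz (by simp [h0])
      have key : (z + 1) ^ ((1:ℂ)/4) * z ^ (-((1:ℂ)/4)) = ((z + 1)/z) ^ ((1:ℂ)/4) := by
        apply cpow_mul_cpow_neg
        rcases lt_or_gt_of_ne hz with h | h
        · right; constructor <;> first | linarith | (simp; linarith)
        · left; constructor <;> first | linarith | (simp; linarith)
      have hval : (1 + z⁻¹) = (z + 1)/z := by field_simp [hz0]
      rw [hval, ← key, hq]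
  simp only [structural]
  by_cases hij : i = j
  · subst hij
    simp only [Matrix.diagonal_apply_eq]
    fin_cases i
    · exact hc0
    · exact hc1
    · exact hc2
    · exact hc3
  · simp only [Matrix.diagonal_apply_ne _ hij]
    exact isBigO_zero _ _

lemma part1 (i j : Fin 4) : AnalyticOnNhd ℂ (fun z : ℂ => Nmat z i j) twoCutPlane := by
  intro z hz
  have hz' : ¬(z.im = 0 ∧ (z.re ≤ -1 ∨ 1 ≤ z.re)) := hz
  have h1 : (1 - z) ∈ Complex.slitPlane := by
    rw [Complex.mem_slitPlane_iff]
    by_cases him : z.im = 0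
    · left
      have h2 : ¬(z.re ≤ -1 ∨ 1 ≤ z.re) := fun h => hz' ⟨him, h⟩
      push_neg at h2
      simp only [Complex.sub_re, Complex.one_re]
      linarith [h2.2]
    · right; simpa using him
  have h2 : (z + 1) ∈ Complex.slitPlane := by
    rw [Complex.mem_slitPlane_iff]
    by_cases him : z.im = 0
    · left
      have h2 : ¬(z.re ≤ -1 ∨ 1 ≤ z.re) := fun h => hz' ⟨him, h⟩
      push_neg at h2
      simp only [Complex.add_re, Complex.one_re]
      linarith [h2.1]
    · right; simpa using him
  have a0 : AnalyticAt ℂ (fun w : ℂ => (1 - w) ^ (-(1:ℂ)/4)) z :=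
    (analyticAt_const.sub (analyticAt_id)).cpow analyticAt_const h1
  have a1 : AnalyticAt ℂ (fun w : ℂ => (w + 1) ^ (-(1:ℂ)/4)) z :=
    ((analyticAt_id).add analyticAt_const).cpow analyticAt_const h2
  have a2 : AnalyticAt ℂ (fun w : ℂ => (1 - w) ^ ((1:ℂ)/4)) z :=
    (analyticAt_const.sub (analyticAt_id)).cpow analyticAt_const h1
  have a3 : AnalyticAt ℂ (fun w : ℂ => (w + 1) ^ ((1:ℂ)/4)) z :=
    ((analyticAt_id).add analyticAt_const).cpow analyticAt_const h2
  have hrw : (fun w : ℂ => Nmat w i j) = fun w => vfun w i * Amat i j := by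
    funext w
    show (Matrix.diagonal (vfun w) * Amat) i j = _
    rw [Matrix.diagonal_mul]
  rw [hrw]
  apply AnalyticAt.mul _ analyticAt_const
  fin_cases i
  · exact a0
  · exact a1
  · exact a2
  · exact a3

lemma hIexp : Complex.exp (((π:ℝ):ℂ)/2 * Complex.I) = Complex.I := by
  rw [Complex.exp_mul_I, show (((π:ℝ):ℂ)/2) = (((π/2:ℝ)):ℂ) by push_cast; ring,
    ← Complex.ofReal_cos, ← Complex.ofReal_sin, Real.cos_pi_div_two, Real.sin_pi_div_two]
  simp

lemma hIexp' : Complex.exp (-(((π:ℝ):ℂ)/2) * Complex.I) = -Complex.I := by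
  rw [Complex.exp_mul_I, show (-(((π:ℝ):ℂ)/2)) = (((-(π/2):ℝ)):ℂ) by push_cast; ring,
    ← Complex.ofReal_cos, ← Complex.ofReal_sin, Real.cos_neg, Real.sin_neg,
    Real.cos_pi_div_two, Real.sin_pi_div_two]
  simp

lemma hm1 (t : ℂ) : Complex.exp ((t - ↑π*Complex.I)*(-(1:ℂ)/4))
    = Complex.exp ((t + ↑π*Complex.I)*(-(1:ℂ)/4)) * Complex.I := by
  rw [show (t - ↑π*Complex.I)*(-(1:ℂ)/4)
      = (t + ↑π*Complex.I)*(-(1:ℂ)/4) + ((π:ℝ):ℂ)/2 * Complex.I by ring,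
    Complex.exp_add, hIexp]

lemma hm2 (t : ℂ) : Complex.exp ((t - ↑π*Complex.I)*((1:ℂ)/4))
    = Complex.exp ((t + ↑π*Complex.I)*((1:ℂ)/4)) * (-Complex.I) := by
  rw [show (t - ↑π*Complex.I)*((1:ℂ)/4)
      = (t + ↑π*Complex.I)*((1:ℂ)/4) + (-(((π:ℝ):ℂ)/2)) * Complex.I by ring,
    Complex.exp_add, hIexp']

lemma hm1' (t : ℂ) : Complex.exp ((t + ↑π*Complex.I)*(-(1:ℂ)/4))
    = Complex.exp ((t - ↑π*Complex.I)*(-(1:ℂ)/4)) * (-Complex.I) := by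
  rw [hm1 t, mul_assoc]; simp

lemma hm2' (t : ℂ) : Complex.exp ((t + ↑π*Complex.I)*((1:ℂ)/4))
    = Complex.exp ((t - ↑π*Complex.I)*((1:ℂ)/4)) * Complex.I := by
  rw [hm2 t, mul_assoc]; simp

lemma hDrA : Matrix.diagonal (![Complex.I, 1, -Complex.I, 1] : Fin 4 → ℂ) * Amat
    = Amat * !![0, 0, 1, 0; 0, 1, 0, 0; -1, 0, 0, 0; 0, 0, 0, 1] := by
  ext i j
  rw [Matrix.diagonal_mul, Matrix.mul_apply]
  fin_cases i <;> fin_cases j <;>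
    simp [Amat, Fin.sum_univ_four] <;> ring_nf <;> simp [Complex.I_sq, Matrix.vecHead, Matrix.vecTail] <;> ring_nf

lemma hDrA' : Matrix.diagonal (![1, -Complex.I, 1, Complex.I] : Fin 4 → ℂ) * Amat
    = Amat * !![1, 0, 0, 0; 0, 0, 0, 1; 0, 0, 1, 0; 0, -1, 0, 0] := by
  ext i j
  rw [Matrix.diagonal_mul, Matrix.mul_apply]
  fin_cases i <;> fin_cases j <;>
    simp [Amat, Fin.sum_univ_four] <;> ring_nf <;> simp [Complex.I_sq, Matrix.vecHead, Matrix.vecTail] <;> ring_nf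

lemma tendsto_cpow_slit {w : ℂ} (hw : w ∈ Complex.slitPlane) (c : ℂ) {g : ℝ → ℂ}
    (hg : Tendsto g (𝓝[>] (0:ℝ)) (𝓝 w)) :
    Tendsto (fun ε => g ε ^ c) (𝓝[>] (0:ℝ)) (𝓝 (w ^ c)) :=
  (continuousAt_cpow_const hw).tendsto.comp hg

lemma tendsto_cpow_lower {a : ℝ} (ha : a < 0) (c : ℂ) {g : ℝ → ℂ}
    (hg : Tendsto g (𝓝[>] (0:ℝ)) (𝓝 (a:ℂ)))
    (him : ∀ᶠ ε in 𝓝[>] (0:ℝ), (g ε).im < 0) :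
    Tendsto (fun ε => g ε ^ c) (𝓝[>] (0:ℝ))
      (𝓝 (Complex.exp ((Real.log (-a) - π * Complex.I) * c))) := by
  have hg' : Tendsto g (𝓝[>] (0:ℝ)) (𝓝[{z : ℂ | z.im < 0}] (a:ℂ)) :=
    tendsto_nhdsWithin_iff.2 ⟨hg, him⟩
  have hlog := (Complex.tendsto_log_nhdsWithin_im_neg_of_re_neg_of_im_zero
    (z := (a:ℂ)) (by simpa using ha) (by simp)).comp hg'
  have hexp : Tendsto (fun ε => Complex.exp (Complex.log (g ε) * c)) (𝓝[>] (0:ℝ))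
      (𝓝 (Complex.exp ((Real.log (-a) - π * Complex.I) * c))) := by
    have h2 := (Complex.continuous_exp.tendsto _).comp (hlog.mul_const c)
    simp only [Function.comp_def] at h2 ⊢
    convert h2 using 3
    rw [Complex.norm_real, Real.norm_eq_abs, abs_of_neg ha]
  refine Tendsto.congr' ?_ hexp
  filter_upwards [him] with ε hε
  have hne : g ε ≠ 0 := by
    intro h0; rw [h0] at hε; simp at hε
  rw [Complex.cpow_def_of_ne_zero hne]

lemma tendsto_cpow_upper {a : ℝ} (ha : a < 0) (c : ℂ) {g : ℝ → ℂ}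
    (hg : Tendsto g (𝓝[>] (0:ℝ)) (𝓝 (a:ℂ)))
    (him : ∀ᶠ ε in 𝓝[>] (0:ℝ), 0 < (g ε).im) :
    Tendsto (fun ε => g ε ^ c) (𝓝[>] (0:ℝ))
      (𝓝 (Complex.exp ((Real.log (-a) + π * Complex.I) * c))) := by
  have hg' : Tendsto g (𝓝[>] (0:ℝ)) (𝓝[{z : ℂ | 0 ≤ z.im}] (a:ℂ)) :=
    tendsto_nhdsWithin_iff.2 ⟨hg, him.mono fun ε h => le_of_lt h⟩
  have hlog := (Complex.tendsto_log_nhdsWithin_im_nonneg_of_re_neg_of_im_zero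
    (z := (a:ℂ)) (by simpa using ha) (by simp)).comp hg'
  have hexp : Tendsto (fun ε => Complex.exp (Complex.log (g ε) * c)) (𝓝[>] (0:ℝ))
      (𝓝 (Complex.exp ((Real.log (-a) + π * Complex.I) * c))) := by
    have h2 := (Complex.continuous_exp.tendsto _).comp (hlog.mul_const c)
    simp only [Function.comp_def] at h2 ⊢
    convert h2 using 3
    rw [Complex.norm_real, Real.norm_eq_abs, abs_of_neg ha]
  refine Tendsto.congr' ?_ hexp
  filter_upwards [him] with ε hε
  have hne : g ε ≠ 0 := by
    intro h0; rw [h0] at hε; simp at hε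
  rw [Complex.cpow_def_of_ne_zero hne]

lemma tendsto_nmat {g : ℝ → ℂ} {w : Fin 4 → ℂ}
    (h : ∀ i, Tendsto (fun ε => vfun (g ε) i) (𝓝[>] (0:ℝ)) (𝓝 (w i))) :
    Tendsto (fun ε => Nmat (g ε)) (𝓝[>] (0:ℝ)) (𝓝 (Matrix.diagonal w * Amat)) := by
  apply tendsto_pi_nhds.2
  intro i
  apply tendsto_pi_nhds.2
  intro j
  have hrw : (fun ε => Nmat (g ε) i j) = fun ε => vfun (g ε) i * Amat i j := by
    funext ε
    show (Matrix.diagonal (vfun (g ε)) * Amat) i j = _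
    rw [Matrix.diagonal_mul]
  have hrw2 : (Matrix.diagonal w * Amat) i j = w i * Amat i j := Matrix.diagonal_mul _ _ _ _
  show Tendsto (fun ε => Nmat (g ε) i j) _ _
  rw [hrw, hrw2]
  exact (h i).mul_const _

lemma part2 (x : ℝ) (hx : 1 < x) :
    ∃ Np Nm : Matrix (Fin 4) (Fin 4) ℂ,
      Tendsto (fun ε : ℝ => Nmat ((x:ℂ) + ε * Complex.I)) (𝓝[>] (0:ℝ)) (𝓝 Np) ∧
      Tendsto (fun ε : ℝ => Nmat ((x:ℂ) - ε * Complex.I)) (𝓝[>] (0:ℝ)) (𝓝 Nm) ∧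
      Np = Nm * !![0, 0, 1, 0; 0, 1, 0, 0; -1, 0, 0, 0; 0, 0, 0, 1] := by
  have hpos : ∀ᶠ ε : ℝ in 𝓝[>] (0:ℝ), 0 < ε :=
    eventually_nhdsWithin_of_forall fun ε h => h
  set t : ℂ := ((Real.log (x - 1) : ℝ) : ℂ) with ht
  refine ⟨Matrix.diagonal
      ![Complex.exp ((t - ↑π*Complex.I)*(-(1:ℂ)/4)), ((x:ℂ)+1) ^ (-(1:ℂ)/4),
        Complex.exp ((t - ↑π*Complex.I)*((1:ℂ)/4)), ((x:ℂ)+1) ^ ((1:ℂ)/4)] * Amat,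
    Matrix.diagonal
      ![Complex.exp ((t + ↑π*Complex.I)*(-(1:ℂ)/4)), ((x:ℂ)+1) ^ (-(1:ℂ)/4),
        Complex.exp ((t + ↑π*Complex.I)*((1:ℂ)/4)), ((x:ℂ)+1) ^ ((1:ℂ)/4)] * Amat,
    ?_, ?_, ?_⟩
  · apply tendsto_nmat
    have hg1 : Tendsto (fun ε : ℝ => 1 - ((x:ℂ) + ε * Complex.I)) (𝓝[>] (0:ℝ))
        (𝓝 (((1 - x : ℝ) : ℂ))) := by
      have hc : Continuous (fun ε : ℝ => 1 - ((x:ℂ) + ε * Complex.I)) := by fun_prop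
      have := (hc.tendsto 0).mono_left (nhdsWithin_le_nhds (s := Set.Ioi (0:ℝ)))
      convert this using 2
      push_cast; ring
    have him1 : ∀ᶠ ε : ℝ in 𝓝[>] (0:ℝ), (1 - ((x:ℂ) + ε * Complex.I)).im < 0 :=
      hpos.mono fun ε h => by simp; linarith
    have hg2 : Tendsto (fun ε : ℝ => ((x:ℂ) + ε * Complex.I) + 1) (𝓝[>] (0:ℝ))
        (𝓝 ((x:ℂ) + 1)) := by
      have hc : Continuous (fun ε : ℝ => ((x:ℂ) + ε * Complex.I) + 1) := by fun_prop
      have := (hc.tendsto 0).mono_left (nhdsWithin_le_nhds (s := Set.Ioi (0:ℝ)))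
      convert this using 2
      push_cast; ring
    have hslit : ((x:ℂ) + 1) ∈ Complex.slitPlane := by
      rw [Complex.mem_slitPlane_iff]; left; simp; linarith
    intro i
    fin_cases i
    · have := tendsto_cpow_lower (a := 1 - x) (by linarith) (-(1:ℂ)/4) hg1 him1
      rw [show -(1 - x) = x - 1 by ring] at this
      exact this
    · exact tendsto_cpow_slit hslit (-(1:ℂ)/4) hg2
    · have := tendsto_cpow_lower (a := 1 - x) (by linarith) ((1:ℂ)/4) hg1 him1
      rw [show -(1 - x) = x - 1 by ring] at this
      exact this
    · exact tendsto_cpow_slit hslit ((1:ℂ)/4) hg2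
  · apply tendsto_nmat
    have hg1 : Tendsto (fun ε : ℝ => 1 - ((x:ℂ) - ε * Complex.I)) (𝓝[>] (0:ℝ))
        (𝓝 (((1 - x : ℝ) : ℂ))) := by
      have hc : Continuous (fun ε : ℝ => 1 - ((x:ℂ) - ε * Complex.I)) := by fun_prop
      have := (hc.tendsto 0).mono_left (nhdsWithin_le_nhds (s := Set.Ioi (0:ℝ)))
      convert this using 2
      push_cast; ring
    have him1 : ∀ᶠ ε : ℝ in 𝓝[>] (0:ℝ), 0 < (1 - ((x:ℂ) - ε * Complex.I)).im :=
      hpos.mono fun ε h => by simp; linarith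
    have hg2 : Tendsto (fun ε : ℝ => ((x:ℂ) - ε * Complex.I) + 1) (𝓝[>] (0:ℝ))
        (𝓝 ((x:ℂ) + 1)) := by
      have hc : Continuous (fun ε : ℝ => ((x:ℂ) - ε * Complex.I) + 1) := by fun_prop
      have := (hc.tendsto 0).mono_left (nhdsWithin_le_nhds (s := Set.Ioi (0:ℝ)))
      convert this using 2
      push_cast; ring
    have hslit : ((x:ℂ) + 1) ∈ Complex.slitPlane := by
      rw [Complex.mem_slitPlane_iff]; left; simp; linarith
    intro i
    fin_cases i
    · have := tendsto_cpow_upper (a := 1 - x) (by linarith) (-(1:ℂ)/4) hg1 him1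
      rw [show -(1 - x) = x - 1 by ring] at this
      exact this
    · exact tendsto_cpow_slit hslit (-(1:ℂ)/4) hg2
    · have := tendsto_cpow_upper (a := 1 - x) (by linarith) ((1:ℂ)/4) hg1 him1
      rw [show -(1 - x) = x - 1 by ring] at this
      exact this
    · exact tendsto_cpow_slit hslit ((1:ℂ)/4) hg2
  · have hv : (![Complex.exp ((t - ↑π*Complex.I)*(-(1:ℂ)/4)), ((x:ℂ)+1) ^ (-(1:ℂ)/4),
        Complex.exp ((t - ↑π*Complex.I)*((1:ℂ)/4)), ((x:ℂ)+1) ^ ((1:ℂ)/4)] : Fin 4 → ℂ)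
        = fun i => (![Complex.exp ((t + ↑π*Complex.I)*(-(1:ℂ)/4)), ((x:ℂ)+1) ^ (-(1:ℂ)/4),
            Complex.exp ((t + ↑π*Complex.I)*((1:ℂ)/4)), ((x:ℂ)+1) ^ ((1:ℂ)/4)] : Fin 4 → ℂ) i *
          (![Complex.I, 1, -Complex.I, 1] : Fin 4 → ℂ) i := by
      funext i
      fin_cases i
      · exact hm1 t
      · show ((x:ℂ)+1) ^ (-(1:ℂ)/4) = ((x:ℂ)+1) ^ (-(1:ℂ)/4) * 1
        exact (mul_one _).symm
      · exact hm2 t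
      · show ((x:ℂ)+1) ^ ((1:ℂ)/4) = ((x:ℂ)+1) ^ ((1:ℂ)/4) * 1
        exact (mul_one _).symm
    rw [hv, ← Matrix.diagonal_mul_diagonal, mul_assoc, hDrA, ← mul_assoc, mul_assoc]

lemma part3 (x : ℝ) (hx : x < -1) :
    ∃ Np Nm : Matrix (Fin 4) (Fin 4) ℂ,
      Tendsto (fun ε : ℝ => Nmat ((x:ℂ) + ε * Complex.I)) (𝓝[>] (0:ℝ)) (𝓝 Np) ∧
      Tendsto (fun ε : ℝ => Nmat ((x:ℂ) - ε * Complex.I)) (𝓝[>] (0:ℝ)) (𝓝 Nm) ∧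
      Np = Nm * !![1, 0, 0, 0; 0, 0, 0, 1; 0, 0, 1, 0; 0, -1, 0, 0] := by
  have hpos : ∀ᶠ ε : ℝ in 𝓝[>] (0:ℝ), 0 < ε :=
    eventually_nhdsWithin_of_forall fun ε h => h
  set t : ℂ := ((Real.log (-(x + 1)) : ℝ) : ℂ) with ht
  refine ⟨Matrix.diagonal
      ![(1 - (x:ℂ)) ^ (-(1:ℂ)/4), Complex.exp ((t + ↑π*Complex.I)*(-(1:ℂ)/4)),
        (1 - (x:ℂ)) ^ ((1:ℂ)/4), Complex.exp ((t + ↑π*Complex.I)*((1:ℂ)/4))] * Amat,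
    Matrix.diagonal
      ![(1 - (x:ℂ)) ^ (-(1:ℂ)/4), Complex.exp ((t - ↑π*Complex.I)*(-(1:ℂ)/4)),
        (1 - (x:ℂ)) ^ ((1:ℂ)/4), Complex.exp ((t - ↑π*Complex.I)*((1:ℂ)/4))] * Amat,
    ?_, ?_, ?_⟩
  · apply tendsto_nmat
    have hg1 : Tendsto (fun ε : ℝ => 1 - ((x:ℂ) + ε * Complex.I)) (𝓝[>] (0:ℝ))
        (𝓝 (1 - (x:ℂ))) := by
      have hc : Continuous (fun ε : ℝ => 1 - ((x:ℂ) + ε * Complex.I)) := by fun_prop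
      have := (hc.tendsto 0).mono_left (nhdsWithin_le_nhds (s := Set.Ioi (0:ℝ)))
      convert this using 2
      push_cast; ring
    have hg2 : Tendsto (fun ε : ℝ => ((x:ℂ) + ε * Complex.I) + 1) (𝓝[>] (0:ℝ))
        (𝓝 (((x + 1 : ℝ) : ℂ))) := by
      have hc : Continuous (fun ε : ℝ => ((x:ℂ) + ε * Complex.I) + 1) := by fun_prop
      have := (hc.tendsto 0).mono_left (nhdsWithin_le_nhds (s := Set.Ioi (0:ℝ)))
      convert this using 2
      push_cast; ring
    have him2 : ∀ᶠ ε : ℝ in 𝓝[>] (0:ℝ), 0 < (((x:ℂ) + ε * Complex.I) + 1).im :=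
      hpos.mono fun ε h => by simp; linarith
    have hslit : (1 - (x:ℂ)) ∈ Complex.slitPlane := by
      rw [Complex.mem_slitPlane_iff]; left; simp; linarith
    intro i
    fin_cases i
    · exact tendsto_cpow_slit hslit (-(1:ℂ)/4) hg1
    · exact tendsto_cpow_upper (a := x + 1) (by linarith) (-(1:ℂ)/4) hg2 him2
    · exact tendsto_cpow_slit hslit ((1:ℂ)/4) hg1
    · exact tendsto_cpow_upper (a := x + 1) (by linarith) ((1:ℂ)/4) hg2 him2
  · apply tendsto_nmat
    have hg1 : Tendsto (fun ε : ℝ => 1 - ((x:ℂ) - ε * Complex.I)) (𝓝[>] (0:ℝ))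
        (𝓝 (1 - (x:ℂ))) := by
      have hc : Continuous (fun ε : ℝ => 1 - ((x:ℂ) - ε * Complex.I)) := by fun_prop
      have := (hc.tendsto 0).mono_left (nhdsWithin_le_nhds (s := Set.Ioi (0:ℝ)))
      convert this using 2
      push_cast; ring
    have hg2 : Tendsto (fun ε : ℝ => ((x:ℂ) - ε * Complex.I) + 1) (𝓝[>] (0:ℝ))
        (𝓝 (((x + 1 : ℝ) : ℂ))) := by
      have hc : Continuous (fun ε : ℝ => ((x:ℂ) - ε * Complex.I) + 1) := by fun_prop
      have := (hc.tendsto 0).mono_left (nhdsWithin_le_nhds (s := Set.Ioi (0:ℝ)))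
      convert this using 2
      push_cast; ring
    have him2 : ∀ᶠ ε : ℝ in 𝓝[>] (0:ℝ), (((x:ℂ) - ε * Complex.I) + 1).im < 0 :=
      hpos.mono fun ε h => by simp; linarith
    have hslit : (1 - (x:ℂ)) ∈ Complex.slitPlane := by
      rw [Complex.mem_slitPlane_iff]; left; simp; linarith
    intro i
    fin_cases i
    · exact tendsto_cpow_slit hslit (-(1:ℂ)/4) hg1
    · exact tendsto_cpow_lower (a := x + 1) (by linarith) (-(1:ℂ)/4) hg2 him2
    · exact tendsto_cpow_slit hslit ((1:ℂ)/4) hg1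
    · exact tendsto_cpow_lower (a := x + 1) (by linarith) ((1:ℂ)/4) hg2 him2
  · have hv : (![(1 - (x:ℂ)) ^ (-(1:ℂ)/4), Complex.exp ((t + ↑π*Complex.I)*(-(1:ℂ)/4)),
        (1 - (x:ℂ)) ^ ((1:ℂ)/4), Complex.exp ((t + ↑π*Complex.I)*((1:ℂ)/4))] : Fin 4 → ℂ)
        = fun i => (![(1 - (x:ℂ)) ^ (-(1:ℂ)/4), Complex.exp ((t - ↑π*Complex.I)*(-(1:ℂ)/4)),
            (1 - (x:ℂ)) ^ ((1:ℂ)/4), Complex.exp ((t - ↑π*Complex.I)*((1:ℂ)/4))] : Fin 4 → ℂ) i *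
          (![1, -Complex.I, 1, Complex.I] : Fin 4 → ℂ) i := by
      funext i
      fin_cases i
      · show (1 - (x:ℂ)) ^ (-(1:ℂ)/4) = (1 - (x:ℂ)) ^ (-(1:ℂ)/4) * 1
        exact (mul_one _).symm
      · exact hm1' t
      · show (1 - (x:ℂ)) ^ ((1:ℂ)/4) = (1 - (x:ℂ)) ^ ((1:ℂ)/4) * 1
        exact (mul_one _).symm
      · exact hm2' t
    rw [hv, ← Matrix.diagonal_mul_diagonal, mul_assoc, hDrA', ← mul_assoc, mul_assoc]

/-- `N` is analytic in `ℂ ∖ ((-∞,-1] ∪ [1,∞))`, satisfies the stated jump relations on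
`(1,∞)` and `(-∞,-1)`, and `N(z)·A⁻¹·diag((-z)^{1/4}, z^{1/4}, (-z)^{-1/4}, z^{-1/4}) = I + O(z⁻¹)`
as `z → ∞` off `ℝ`. -/
theorem gap_tacnode_N_RH_problem :
    (∀ i j : Fin 4, AnalyticOnNhd ℂ (fun z : ℂ => Nmat z i j) twoCutPlane) ∧
    (∀ x : ℝ, 1 < x →
      ∃ Np Nm : Matrix (Fin 4) (Fin 4) ℂ,
        Tendsto (fun ε : ℝ => Nmat ((x:ℂ) + ε * Complex.I)) (𝓝[>] (0:ℝ)) (𝓝 Np) ∧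
        Tendsto (fun ε : ℝ => Nmat ((x:ℂ) - ε * Complex.I)) (𝓝[>] (0:ℝ)) (𝓝 Nm) ∧
        Np = Nm * !![0, 0, 1, 0; 0, 1, 0, 0; -1, 0, 0, 0; 0, 0, 0, 1]) ∧
    (∀ x : ℝ, x < -1 →
      ∃ Np Nm : Matrix (Fin 4) (Fin 4) ℂ,
        Tendsto (fun ε : ℝ => Nmat ((x:ℂ) + ε * Complex.I)) (𝓝[>] (0:ℝ)) (𝓝 Np) ∧
        Tendsto (fun ε : ℝ => Nmat ((x:ℂ) - ε * Complex.I)) (𝓝[>] (0:ℝ)) (𝓝 Nm) ∧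
        Np = Nm * !![1, 0, 0, 0; 0, 0, 0, 1; 0, 0, 1, 0; 0, -1, 0, 0]) ∧
    (∀ i j : Fin 4,
      (fun z : ℂ =>
          (Nmat z * Amat⁻¹ *
            Matrix.diagonal ![(-z) ^ ((1:ℂ)/4), z ^ ((1:ℂ)/4),
              (-z) ^ (-(1:ℂ)/4), z ^ (-(1:ℂ)/4)]
            - 1) i j)
        =O[(Bornology.cobounded ℂ) ⊓ Filter.principal {z : ℂ | z.im ≠ 0}]
          (fun z : ℂ => z⁻¹)) := by
  exact ⟨part1, fun x hx => part2 x hx, fun x hx => part3 x hx, part4⟩
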